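/- For every graph G, the queue-number is less than the track-number: qn(G) ≤ tn(G) − 1. -/

import Mathlib

open SimpleGraph

/-- A (proper) track layout of the graph `G` with `t` tracks.
`track v` is the track (colour class) of vertex `v`, and `pos v` gives the
position of `v` in the total order of its track. -/
structure TrackLayout (V : Type) (G : SimpleGraph V) (t : ℕ) where
  /-- the track containing each vertex -/
  track : V → Fin t
  /-- the position of each vertex within its track -/
  pos : V → ℕ
  /-- distinct vertices on a common track occupy distinct positions -/
  inj : ∀ v w : V, track v = track w → pos v = pos w → v = w
  /-- the tracks form a proper vertex colouring -/
  proper : ∀ v w : V, G.Adj v w → track v ≠ track w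
  /-- no X-crossing: there are no edges `vw` and `xy` with `v, x` on one track,
  `w, y` on another track, `v <ᵢ x` and `y <ⱼ w` -/
  noX : ∀ v w x y : V, G.Adj v w → G.Adj x y →
    track v = track x → track w = track y → track v ≠ track w →
    pos v < pos x → pos y < pos w → False
/-- The track-number of `G`: the minimum `t` such that `G` has a `t`-track layout. -/
noncomputable def trackNumber (V : Type) (G : SimpleGraph V) : ℕ :=
  sInf {t : ℕ | Nonempty (TrackLayout V G t)}
/-- A queue layout of `G` with `q` queues: a vertex-ordering (given by an injection
`ord : V → ℕ`) together with an assignment of the edges to queues `0, …, q-1`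
such that no two edges in a common queue are nested. -/
structure QueueLayout (V : Type) (G : SimpleGraph V) (q : ℕ) where
  /-- the vertex-ordering -/
  ord : V → ℕ
  ordInj : Function.Injective ord
  /-- the queue assigned to each edge -/
  queue : V → V → ℕ
  queueSymm : ∀ v w : V, queue v w = queue w v
  queueLt : ∀ v w : V, G.Adj v w → queue v w < q
  /-- no two edges in a common queue are nested -/
  noNested : ∀ v w x y : V, G.Adj v w → G.Adj x y → queue v w = queue x y →
    ord v < ord x → ord x < ord y → ord y < ord w → False
/-- The queue-number of `G`: the minimum number of queues in a queue layout of `G`. -/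
noncomputable def queueNumber (V : Type) (G : SimpleGraph V) : ℕ :=
  sInf {q : ℕ | Nonempty (QueueLayout V G q)}

/-- For every graph `G`, the queue-number is less than the
track-number: `qn(G) ≤ tn(G) - 1`. -/


private lemma mul_add_lt {M a c p q : ℕ} (hp : p < M) (hac : a < c) :
    a * M + p < c * M + q := by
  calc a * M + p < a * M + M := Nat.add_lt_add_left hp _
    _ = (a + 1) * M := by ring
    _ ≤ c * M := Nat.mul_le_mul_right M hac
    _ ≤ c * M + q := Nat.le_add_right _ _

private lemma lex_of_lt {M a c p q : ℕ} (hp : p < M) (hq : q < M)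
    (h : a * M + p < c * M + q) : a < c ∨ (a = c ∧ p < q) := by
  rcases lt_trichotomy a c with h1 | h1 | h1
  · exact Or.inl h1
  · subst h1
    exact Or.inr ⟨rfl, lt_of_add_lt_add_left h⟩
  · exact absurd (mul_add_lt hq h1) (lt_asymm h)

private lemma lex_of_eq {M a c p q : ℕ} (hp : p < M) (hq : q < M)
    (h : a * M + p = c * M + q) : a = c ∧ p = q := by
  rcases lt_trichotomy a c with h1 | h1 | h1
  · exact absurd h (Nat.ne_of_lt (mul_add_lt hp h1))
  · subst h1
    exact ⟨rfl, Nat.add_left_cancel h⟩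
  · exact absurd h.symm (Nat.ne_of_lt (mul_add_lt hq h1))

theorem queueNumber_le_trackNumber_sub_one {V : Type} [Fintype V]
    (G : SimpleGraph V) :
    queueNumber V G ≤ trackNumber V G - 1 := by
  classical
  have hne : Nonempty (TrackLayout V G (Fintype.card V)) := by
    let e := Fintype.equivFin V
    refine ⟨⟨fun v => e v, fun _ => 0, ?_, ?_, ?_⟩⟩
    · intro v w h _oops
      exact e.injective h
    · intro v w hvw h
      exact G.ne_of_adj hvw (e.injective h)
    · intro v w x y _ _ hvx _ _ hpv _
      have : v = x := e.injective hvx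
      subst this
      exact lt_irrefl _ hpv
  have hmem : Nonempty (TrackLayout V G (trackNumber V G)) :=
    Nat.sInf_mem (⟨Fintype.card V, hne⟩ :
      Set.Nonempty {t : ℕ | Nonempty (TrackLayout V G t)})
  obtain ⟨L⟩ := hmem
  set t := trackNumber V G with ht
  set M : ℕ := (Finset.univ : Finset V).sup L.pos + 1 with hM
  have hposM : ∀ v : V, L.pos v < M := by
    intro v
    have := Finset.le_sup (f := L.pos) (Finset.mem_univ v)
    omega
  have hlt : ∀ v w : V, (L.track v : ℕ) * M + L.pos v < (L.track w : ℕ) * M + L.pos w →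
      (L.track v : ℕ) < L.track w ∨
      ((L.track v : ℕ) = L.track w ∧ L.pos v < L.pos w) := by
    intro v w h
    exact lex_of_lt (hposM v) (hposM w) h
  refine Nat.sInf_le ?_
  refine ⟨⟨fun v => (L.track v : ℕ) * M + L.pos v, ?_,
      fun v w => max (L.track v : ℕ) (L.track w) - min (L.track v : ℕ) (L.track w) - 1,
      ?_, ?_, ?_⟩⟩
  · intro v w h
    obtain ⟨h1, h2⟩ := lex_of_eq (hposM v) (hposM w) h
    exact L.inj v w (Fin.val_injective h1) h2
  · intro v w
    simp [max_comm, min_comm]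
  · intro v w hvw
    show max (L.track v : ℕ) (L.track w) - min (L.track v : ℕ) (L.track w) - 1 < t - 1
    have h1 : (L.track v : ℕ) < t := (L.track v).isLt
    have h2 : (L.track w : ℕ) < t := (L.track w).isLt
    have h3 : (L.track v : ℕ) ≠ (L.track w : ℕ) := by
      intro h
      exact L.proper v w hvw (Fin.val_injective h)
    rcases le_total (L.track v : ℕ) (L.track w : ℕ) with h | h
    · rw [max_eq_right h, min_eq_left h]; omega
    · rw [max_eq_left h, min_eq_right h]; omega
  · intro v w x y hvw hxy hq h1 h2 h3
    have hab : (L.track v : ℕ) ≠ (L.track w : ℕ) := fun h =>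
      L.proper v w hvw (Fin.val_injective h)
    have hcd : (L.track x : ℕ) ≠ (L.track y : ℕ) := fun h =>
      L.proper x y hxy (Fin.val_injective h)
    have hvw' : (L.track v : ℕ) < L.track w := by
      rcases hlt v w (h1.trans (h2.trans h3)) with h | ⟨h, _⟩
      · exact h
      · exact absurd h hab
    have hxy' : (L.track x : ℕ) < L.track y := by
      rcases hlt x y h2 with h | ⟨h, _⟩
      · exact h
      · exact absurd h hcd
    rw [max_eq_right hvw'.le, min_eq_left hvw'.le,
        max_eq_right hxy'.le, min_eq_left hxy'.le] at hq
    have hdiff : (L.track w : ℕ) - L.track v = (L.track y : ℕ) - L.track x := by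
      omega
    rcases hlt v x h1 with hac | ⟨hac, hpvx⟩
    · rcases hlt y w h3 with hdb | ⟨hdb, _⟩ <;> omega
    · rcases hlt y w h3 with hdb | ⟨hdb, hpyw⟩
      · omega
      · exact L.noX v w x y hvw hxy (Fin.val_injective hac)
          (Fin.val_injective hdb.symm) (L.proper v w hvw) hpvx hpyw
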